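/- (Stechkin-type tail bound) Let (a_j)_{j≥1} be a nonincreasing sequence of nonnegative reals with Σ_{j=1}^∞ a_j^p =: A^p < ∞ for some 0 < p < 1. Then for every s ≥ 1, the tail satisfies Σ_{j=s+1}^∞ a_j ≤ A · s^{1 − 1/p} · (min(1, 1/p − 1))^{−1}, and in particular Σ_{j>s} a_j ≤ C_p s^{1−1/p} with C_p depending only on p and A. -/

import Mathlib

/-- Stechkin-type tail bound: if `(a_j)_{j≥1}` is nonincreasing, nonnegative, with
`Σ_{j≥1} a_j^p = A^p < ∞` for some `0 < p < 1`, then for every `s ≥ 1`,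
`Σ_{j>s} a_j ≤ A s^{1-1/p} (min(1, 1/p - 1))⁻¹`.
(Here `a i` denotes `a_{i+1}`, so the tail `Σ_{j>s}` is `Σ_i a (s+i)`.) -/
theorem stmt10 (p : ℝ) (hp0 : 0 < p) (hp1 : p < 1)
    (a : ℕ → ℝ) (ha0 : ∀ j, 0 ≤ a j) (hmono : ∀ j, a (j + 1) ≤ a j)
    (A : ℝ) (hA : 0 ≤ A)
    (hsum : Summable (fun j => a j ^ p))
    (hAp : ∑' j : ℕ, a j ^ p = A ^ p) :
    ∀ s : ℕ, 1 ≤ s →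
      ∑' i : ℕ, a (s + i) ≤ A * (s : ℝ) ^ (1 - 1 / p) * (min 1 (1 / p - 1))⁻¹ := by
  intro s hs
  have hmono' : Antitone a := antitone_nat_of_succ_le hmono
  have h1p : (0:ℝ) < 1 - p := by linarith
  have hs0 : (0:ℝ) < (s:ℝ) := by exact_mod_cast hs
  -- pointwise bound a(s+i) ≤ a s ^ (1-p) * a(s+i)^p
  have hpt : ∀ i, a (s + i) ≤ a s ^ (1 - p) * a (s + i) ^ p := by
    intro i
    have h1 : a (s + i) ≤ a s := hmono' (Nat.le_add_right s i)
    calc a (s + i) = a (s + i) ^ (p + (1 - p)) := by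
          rw [show p + (1 - p) = 1 by ring, Real.rpow_one]
      _ = a (s + i) ^ p * a (s + i) ^ (1 - p) :=
          Real.rpow_add' (ha0 _) (by rw [show p + (1 - p) = 1 by ring]; exact one_ne_zero)
      _ ≤ a (s + i) ^ p * a s ^ (1 - p) := by
          apply mul_le_mul_of_nonneg_left _ (Real.rpow_nonneg (ha0 _) _)
          exact Real.rpow_le_rpow (ha0 _) h1 h1p.le
      _ = a s ^ (1 - p) * a (s + i) ^ p := by ring
  have hsum_tail : Summable (fun i => a (s + i) ^ p) := by
    have := (summable_nat_add_iff (f := fun j => a j ^ p) s).mpr hsum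
    simpa [add_comm] using this
  have hsummA : Summable (fun i => a (s + i)) :=
    Summable.of_nonneg_of_le (fun i => ha0 _) hpt (hsum_tail.mul_left _)
  have htail_p : ∑' i, a (s + i) ^ p ≤ A ^ p := by
    rw [← hAp]
    have hsplit := Summable.sum_add_tsum_nat_add (f := fun j => a j ^ p) s hsum
    have hfin : 0 ≤ ∑ i ∈ Finset.range s, a i ^ p :=
      Finset.sum_nonneg fun i _ => Real.rpow_nonneg (ha0 i) p
    have : ∑' i, a (s + i) ^ p = ∑' i, a (i + s) ^ p := by
      congr 1; ext i; rw [add_comm]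
    rw [this]
    linarith [hsplit]
  have step1 : ∑' i, a (s + i) ≤ a s ^ (1 - p) * A ^ p := by
    calc ∑' i, a (s + i) ≤ ∑' i, a s ^ (1 - p) * a (s + i) ^ p :=
          Summable.tsum_le_tsum hpt hsummA (hsum_tail.mul_left _)
      _ = a s ^ (1 - p) * ∑' i, a (s + i) ^ p := tsum_mul_left
      _ ≤ a s ^ (1 - p) * A ^ p :=
          mul_le_mul_of_nonneg_left htail_p (Real.rpow_nonneg (ha0 s) _)
  -- bound a s ≤ A * s^(-1/p)
  have hkey : (s:ℝ) * a s ^ p ≤ A ^ p := by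
    rw [← hAp]
    calc (s:ℝ) * a s ^ p = ∑ _i ∈ Finset.range s, a s ^ p := by
          simp [mul_comm]
      _ ≤ ∑ i ∈ Finset.range s, a i ^ p := by
          apply Finset.sum_le_sum
          intro i hi
          exact Real.rpow_le_rpow (ha0 s) (hmono' (Finset.mem_range.mp hi).le) hp0.le
      _ ≤ ∑' j, a j ^ p :=
          Summable.sum_le_tsum _ (fun i _ => Real.rpow_nonneg (ha0 i) p) hsum
  have has : a s ≤ A * (s:ℝ) ^ (-(1/p)) := by
    have h2 : a s ^ p ≤ A ^ p / (s:ℝ) := by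
      rw [le_div_iff₀ hs0]; linarith [hkey, mul_comm (s:ℝ) (a s ^ p)]
    have h3 : (a s ^ p) ^ (1/p) ≤ (A ^ p / (s:ℝ)) ^ (1/p) :=
      Real.rpow_le_rpow (Real.rpow_nonneg (ha0 s) p) h2 (by positivity)
    have hL : (a s ^ p) ^ (1/p) = a s := by
      rw [← Real.rpow_mul (ha0 s), mul_one_div, div_self hp0.ne', Real.rpow_one]
    have hR : (A ^ p / (s:ℝ)) ^ (1/p) = A * (s:ℝ) ^ (-(1/p)) := by
      rw [Real.div_rpow (Real.rpow_nonneg hA p) hs0.le,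
        ← Real.rpow_mul hA, mul_one_div, div_self hp0.ne', Real.rpow_one,
        div_eq_mul_inv, ← Real.rpow_neg hs0.le]
    rw [hL, hR] at h3
    exact h3
  have final : a s ^ (1 - p) * A ^ p ≤ A * (s:ℝ) ^ (1 - 1/p) := by
    have hAs : 0 ≤ A * (s:ℝ) ^ (-(1/p)) := by positivity
    calc a s ^ (1 - p) * A ^ p ≤ (A * (s:ℝ) ^ (-(1/p))) ^ (1 - p) * A ^ p := by
          apply mul_le_mul_of_nonneg_right _ (Real.rpow_nonneg hA p)
          exact Real.rpow_le_rpow (ha0 s) has h1p.le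
      _ = A * (s:ℝ) ^ (1 - 1/p) := by
          rw [Real.mul_rpow hA (Real.rpow_nonneg hs0.le _),
            ← Real.rpow_mul hs0.le]
          have hexp : -(1/p) * (1 - p) = 1 - 1/p := by field_simp; ring
          rw [hexp]
          have : A ^ (1 - p) * (s:ℝ) ^ (1 - 1/p) * A ^ p
              = A ^ (1 - p) * A ^ p * (s:ℝ) ^ (1 - 1/p) := by ring
          rw [this, ← Real.rpow_add' hA (by rw [show 1 - p + p = 1 by ring]; exact one_ne_zero),
            show 1 - p + p = 1 by ring, Real.rpow_one]
  have hmin : (1:ℝ) ≤ (min 1 (1/p - 1))⁻¹ := by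
    have hgt : (0:ℝ) < 1/p - 1 := by
      have : 1 < 1/p := by rw [lt_div_iff₀ hp0]; linarith
      linarith
    have hpos : (0:ℝ) < min 1 (1/p - 1) := lt_min one_pos hgt
    rw [one_le_inv_iff₀]
    exact ⟨hpos, min_le_left _ _⟩
  calc ∑' i, a (s + i) ≤ a s ^ (1 - p) * A ^ p := step1
    _ ≤ A * (s:ℝ) ^ (1 - 1/p) := final
    _ ≤ A * (s:ℝ) ^ (1 - 1/p) * (min 1 (1/p - 1))⁻¹ :=
        le_mul_of_one_le_right (by positivity) hmin
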